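/- Let k be a non-negative integer, P a finite propositional logic program, and M a stable model of P with |M| ≤ k. Then the set of atoms U_M is a model of the theory T₀(P). -/
import Mathlib


open scoped Classical

noncomputable section

/-- A propositional logic program rule: a head atom, a finite positive body and a
finite negative body. -/
structure LPRule (α : Type) where
  head : α
  pos : Finset α
  neg : Finset α
deriving DecidableEq

/-- A logic program is a finite set of rules. -/
abbrev LProgram (α : Type) := Finset (LPRule α)

variable {α : Type} [DecidableEq α]

/-- `horn r`: the Horn rule with the same head and positive body as `r`
and empty negative body. -/
def LPRule.horn (r : LPRule α) : LPRule α := ⟨r.head, r.pos, ∅⟩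

/-- A rule `r` is proper if `h(r) ∉ b⁺(r)` and `b⁺(r) ∩ b⁻(r) = ∅`. -/
def LPRule.proper (r : LPRule α) : Prop := r.head ∉ r.pos ∧ r.pos ∩ r.neg = ∅

/-- `At(P)`: the set of atoms occurring in `P`. -/
def atomsP (P : LProgram α) : Finset α := P.sup (fun r => insert r.head (r.pos ∪ r.neg))

/-- `h(P)`: the set of heads of rules of `P`. -/
def headsP (P : LProgram α) : Finset α := P.image LPRule.head

/-- `Neg(P)`: the set of atoms occurring negated in `P`. -/
def negP (P : LProgram α) : Finset α := P.sup LPRule.neg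

/-- The least model of a (Horn) program `Q`, given as a set of rules (negative bodies
are ignored; Horn rules have empty negative bodies): the least set `M` of atoms such
that `h(r) ∈ M` whenever `r ∈ Q` and `b⁺(r) ⊆ M`. -/
def LM (Q : Set (LPRule α)) : Set α :=
  ⋂₀ {M : Set α | ∀ r ∈ Q, (↑r.pos : Set α) ⊆ M → r.head ∈ M}

/-- The reduct `P^S`: delete every rule whose negative body meets `S` and remove the
negative bodies of the remaining rules. -/
def reduct (P : LProgram α) (S : Set α) : Set (LPRule α) :=
  LPRule.horn '' {r | r ∈ P ∧ (↑r.neg : Set α) ∩ S = ∅}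

/-- `M` is a stable model of `P` if `M = LM (P^M)`. -/
def isStable (P : LProgram α) (M : Set α) : Prop :=
  M = LM (reduct P M)

/-- The propositional atoms of the encoding `T(P)`: for each program atom `q`,
atoms `c(q)`, `c(q,i)`, `c⁻(q,i)` and `d(q,i)`. -/
inductive EncAtom (α : Type) where
  | c : α → EncAtom α
  | ci : α → ℕ → EncAtom α
  | cm : α → ℕ → EncAtom α
  | d : α → ℕ → EncAtom α
deriving DecidableEq

/-- `U` satisfies `F₁(q,i) = c⁻(q,i) ↔ (c(q,1) ∨ … ∨ c(q,i-1))`. -/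
def SatF1 (U : Set (EncAtom α)) (q : α) (i : ℕ) : Prop :=
  EncAtom.cm q i ∈ U ↔ ∃ j, 1 ≤ j ∧ j ≤ i - 1 ∧ EncAtom.ci q j ∈ U

/-- `U` satisfies `F₂(q) = c(q) ↔ (c(q,1) ∨ … ∨ c(q,k+1))`. -/
def SatF2 (k : ℕ) (U : Set (EncAtom α)) (q : α) : Prop :=
  EncAtom.c q ∈ U ↔ ∃ j, 1 ≤ j ∧ j ≤ k + 1 ∧ EncAtom.ci q j ∈ U

/-- `U` satisfies `F₃(r,i)`; for `i ≥ 2` this is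
`c⁻(a₁,i) ∧ … ∧ c⁻(a_s,i) ∧ ¬c(b₁) ∧ … ∧ ¬c(b_t) ∧ ¬c⁻(q,i)`, for `i = 1` it is
`false` when `b⁺(r) ≠ ∅` and `¬c(b₁) ∧ … ∧ ¬c(b_t)` when `b⁺(r) = ∅`. -/
def SatF3 (U : Set (EncAtom α)) (r : LPRule α) (i : ℕ) : Prop :=
  if i = 1 then r.pos = ∅ ∧ ∀ b ∈ r.neg, EncAtom.c b ∉ U
  else (∀ a ∈ r.pos, EncAtom.cm a i ∈ U) ∧ (∀ b ∈ r.neg, EncAtom.c b ∉ U) ∧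
    EncAtom.cm r.head i ∉ U

/-- `U` satisfies `F₄(q,i) = c(q,i) ↔ (F₃(r₁,i) ∨ … ∨ F₃(r_v,i))`, where
`r₁,…,r_v` are all rules of `P` with head `q`. -/
def SatF4 (P : LProgram α) (U : Set (EncAtom α)) (q : α) (i : ℕ) : Prop :=
  EncAtom.ci q i ∈ U ↔ ∃ r ∈ P, r.head = q ∧ SatF3 U r i

/-- `U` is a model of the theory `T₀(P)`. -/
def ModelT0 (k : ℕ) (P : LProgram α) (U : Set (EncAtom α)) : Prop :=
  (∀ q ∈ atomsP P, ∀ i, 2 ≤ i → i ≤ k + 1 → SatF1 U q i) ∧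
  (∀ q ∈ atomsP P, SatF2 k U q) ∧
  (∀ q ∈ atomsP P, ∀ i, 1 ≤ i → i ≤ k + 1 → SatF4 P U q i)

/-- `M(U) = {q ∈ At(P) : c(q) ∈ U}`. -/
def MU (P : LProgram α) (U : Set (EncAtom α)) : Finset α :=
  (atomsP P).filter (fun q => EncAtom.c q ∈ U)

/-- The van Emden–Kowalski operator `T_Q` of a (Horn) program `Q`
(negative bodies are ignored). -/
def TPstep (Q : Set (LPRule α)) (M : Set α) : Set α :=
  {a | ∃ r ∈ Q, r.head = a ∧ (↑r.pos : Set α) ⊆ M}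

/-- Iterations `T_Q^i(∅)` of the van Emden–Kowalski operator. -/
def TPiter (Q : Set (LPRule α)) : ℕ → Set α
  | 0 => ∅
  | n + 1 => TPstep Q (TPiter Q n)

lemma TPstep_mono (Q : Set (LPRule α)) {A B : Set α} (h : A ⊆ B) :
    TPstep Q A ⊆ TPstep Q B := by
  rintro x ⟨r, hr, hh, hp⟩
  exact ⟨r, hr, hh, hp.trans h⟩

lemma TPiter_succ_mono (Q : Set (LPRule α)) : ∀ n, TPiter Q n ⊆ TPiter Q (n + 1)
  | 0 => by intro x hx; exact absurd hx (Set.notMem_empty x)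
  | n + 1 => TPstep_mono Q (TPiter_succ_mono Q n)

lemma TPiter_mono (Q : Set (LPRule α)) {n m : ℕ} (h : n ≤ m) :
    TPiter Q n ⊆ TPiter Q m := by
  induction h with
  | refl => exact subset_rfl
  | step _ ih => exact ih.trans (TPiter_succ_mono Q _)

lemma TPiter_subset_LM (Q : Set (LPRule α)) : ∀ n, TPiter Q n ⊆ LM Q
  | 0 => by intro x hx; exact absurd hx (Set.notMem_empty x)
  | n + 1 => by
    rintro x ⟨r, hr, hh, hp⟩
    rw [LM, Set.mem_sInter]
    intro N hN
    have hLMN : LM Q ⊆ N := Set.sInter_subset_of_mem hN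
    exact hh ▸ hN r hr (fun a ha => hLMN (TPiter_subset_LM Q n (hp ha)))

lemma TPiter_fix (Q : Set (LPRule α)) {n : ℕ} (h : TPiter Q (n + 1) = TPiter Q n) :
    ∀ m, n ≤ m → TPiter Q m = TPiter Q n := by
  intro m hm
  induction hm with
  | refl => rfl
  | step _ ih =>
    show TPstep Q (TPiter Q _) = TPiter Q n
    rw [ih]; exact h

/-- let `M` be a stable model of `P` with `|M| ≤ k` and, for `q ∈ M`, let
`sq q` be the least `s` with `q ∈ T_{P^M}^s(∅)`.  Then
`U_M = {c(q), c(q,sq q) : q ∈ M} ∪ {c⁻(q,i) : q ∈ M, sq q < i ≤ k+1}`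
is a model of `T₀(P)`. -/
theorem UM_model (k : ℕ) (P : LProgram α) (M : Finset α)
    (hMA : (↑M : Set α) ⊆ ↑(atomsP P))
    (hstable : isStable P ↑M) (hcard : M.card ≤ k)
    (sq : α → ℕ)
    (hsq : ∀ q ∈ M, q ∈ TPiter (reduct P ↑M) (sq q) ∧
      ∀ s < sq q, q ∉ TPiter (reduct P ↑M) s) :
    ModelT0 k P
      {x | (∃ q ∈ M, x = EncAtom.c q) ∨ (∃ q ∈ M, x = EncAtom.ci q (sq q)) ∨
        (∃ q ∈ M, ∃ i, sq q < i ∧ i ≤ k + 1 ∧ x = EncAtom.cm q i)} := by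
  set Q := reduct P (↑M : Set α) with hQdef
  set U : Set (EncAtom α) :=
      {x | (∃ q ∈ M, x = EncAtom.c q) ∨ (∃ q ∈ M, x = EncAtom.ci q (sq q)) ∨
        (∃ q ∈ M, ∃ i, sq q < i ∧ i ≤ k + 1 ∧ x = EncAtom.cm q i)} with hUdef
  -- basic facts
  have hTM : ∀ n, TPiter Q n ⊆ (↑M : Set α) := by
    intro n
    rw [hstable]
    exact TPiter_subset_LM Q n
  have hsq1 : ∀ q ∈ M, 1 ≤ sq q := by
    intro q hq
    by_contra h
    have h0 : sq q = 0 := by omega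
    have := (hsq q hq).1
    rw [h0] at this
    exact absurd this (Set.notMem_empty q)
  have hsqle : ∀ a ∈ M, ∀ n, a ∈ TPiter Q n → sq a ≤ n := by
    intro a ha n hn
    by_contra h
    exact (hsq a ha).2 n (by omega) hn
  -- cardinality bound : sq q ≤ k
  have hchain : ∀ q ∈ M, ∀ n, n ≤ sq q →
      n ≤ (M.filter (fun a => a ∈ TPiter Q n)).card := by
    intro q hq n
    induction n with
    | zero => intro _; exact Nat.zero_le _
    | succ n ih =>
      intro hn
      have hlt := ih (Nat.le_of_succ_le hn)
      by_cases heq : TPiter Q (n + 1) = TPiter Q n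
      · exfalso
        have hfix := TPiter_fix Q heq (sq q) (Nat.le_of_succ_le hn)
        have hqT := (hsq q hq).1
        rw [hfix] at hqT
        exact (hsq q hq).2 n (by omega) hqT
      · obtain ⟨x, hx1, hx2⟩ : ∃ x, x ∈ TPiter Q (n + 1) ∧ x ∉ TPiter Q n := by
          by_contra hc
          push_neg at hc
          exact heq (Set.Subset.antisymm hc (TPiter_succ_mono Q n))
        have hxM : x ∈ M := hTM (n + 1) hx1
        have hsub : (M.filter (fun a => a ∈ TPiter Q n)) ⊆
            (M.filter (fun a => a ∈ TPiter Q (n + 1))) := by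
          intro a ha
          rw [Finset.mem_filter] at ha ⊢
          exact ⟨ha.1, TPiter_succ_mono Q n ha.2⟩
        have hss : (M.filter (fun a => a ∈ TPiter Q n)) ⊂
            (M.filter (fun a => a ∈ TPiter Q (n + 1))) := by
          rw [Finset.ssubset_iff_of_subset hsub]
          exact ⟨x, Finset.mem_filter.mpr ⟨hxM, hx1⟩,
            fun hx => hx2 (Finset.mem_filter.mp hx).2⟩
        have := Finset.card_lt_card hss
        omega
  have hsqk : ∀ q ∈ M, sq q ≤ k := by
    intro q hq
    have h1 := hchain q hq (sq q) le_rfl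
    have h2 := Finset.card_filter_le M (fun a => a ∈ TPiter Q (sq q))
    omega
  -- membership in U
  have hcU : ∀ x : α, EncAtom.c x ∈ U ↔ x ∈ M := by
    intro x
    simp only [hUdef, Set.mem_setOf_eq]
    constructor
    · rintro (⟨q, hq, h⟩ | ⟨q, hq, h⟩ | ⟨q, hq, i, _, _, h⟩) <;> simp_all
    · intro hx; exact Or.inl ⟨x, hx, rfl⟩
  have hciU : ∀ (x : α) (j : ℕ), EncAtom.ci x j ∈ U ↔ x ∈ M ∧ j = sq x := by
    intro x j
    simp only [hUdef, Set.mem_setOf_eq]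
    constructor
    · rintro (⟨q, hq, h⟩ | ⟨q, hq, h⟩ | ⟨q, hq, i, _, _, h⟩) <;> simp_all
    · rintro ⟨hx, rfl⟩; exact Or.inr (Or.inl ⟨x, hx, rfl⟩)
  have hcmU : ∀ (x : α) (i : ℕ),
      EncAtom.cm x i ∈ U ↔ x ∈ M ∧ sq x < i ∧ i ≤ k + 1 := by
    intro x i
    simp only [hUdef, Set.mem_setOf_eq]
    constructor
    · rintro (⟨q, hq, h⟩ | ⟨q, hq, h⟩ | ⟨q, hq, j, h1, h2, h⟩) <;> simp_all
    · rintro ⟨hx, h1, h2⟩; exact Or.inr (Or.inr ⟨x, hx, i, h1, h2, rfl⟩)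
  refine ⟨?_, ?_, ?_⟩
  -- F1
  · intro q _ i h2 hk1
    rw [SatF1, hcmU]
    constructor
    · rintro ⟨hqM, hlt, _⟩
      exact ⟨sq q, hsq1 q hqM, by omega, (hciU q (sq q)).mpr ⟨hqM, rfl⟩⟩
    · rintro ⟨j, hj1, hj2, hji⟩
      obtain ⟨hqM, hj⟩ := (hciU q j).mp hji
      exact ⟨hqM, by omega, hk1⟩
  -- F2
  · intro q _
    rw [SatF2, hcU]
    constructor
    · intro hqM
      refine ⟨sq q, hsq1 q hqM, ?_, (hciU q (sq q)).mpr ⟨hqM, rfl⟩⟩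
      have := hsqk q hqM; omega
    · rintro ⟨j, _, _, hji⟩
      exact ((hciU q j).mp hji).1
  -- F4
  · intro q _ i hi1 hik
    rw [SatF4, hciU]
    constructor
    · rintro ⟨hqM, rfl⟩
      have hqT := (hsq q hqM).1
      obtain ⟨s, hs⟩ : ∃ s, sq q = s + 1 := ⟨sq q - 1, by have := hsq1 q hqM; omega⟩
      rw [hs] at hqT
      obtain ⟨r', hr'Q, hh', hp'⟩ := hqT
      obtain ⟨r, ⟨hrP, hrneg⟩, rfl⟩ := hr'Q
      refine ⟨r, hrP, hh', ?_⟩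
      rw [SatF3]
      have hnegU : ∀ b ∈ r.neg, EncAtom.c b ∉ U := by
        intro b hb hbU
        have hbM : b ∈ M := (hcU b).mp hbU
        have : b ∈ (↑r.neg : Set α) ∩ ↑M := ⟨hb, hbM⟩
        rw [hrneg] at this
        exact this
      split_ifs with h1
      · refine ⟨?_, hnegU⟩
        rw [Finset.eq_empty_iff_forall_notMem]
        intro a ha
        have hs0 : s = 0 := by omega
        have := hp' (a := a) ha
        rw [hs0] at this
        exact absurd this (Set.notMem_empty a)
      · refine ⟨?_, hnegU, ?_⟩
        · intro a ha
          have haT : a ∈ TPiter Q s := hp' (a := a) ha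
          have haM : a ∈ M := hTM s haT
          have hale : sq a ≤ s := hsqle a haM s haT
          exact (hcmU a (sq q)).mpr ⟨haM, by omega, hik⟩
        · intro hcm
          obtain ⟨_, hlt, _⟩ := (hcmU r.head (sq q)).mp hcm
          rw [show r.head = q from hh'] at hlt
          omega
    · rintro ⟨r, hrP, rfl, hF3⟩
      rw [SatF3] at hF3
      split_ifs at hF3 with h1
      · obtain ⟨hpos, hneg⟩ := hF3
        have hnegM : (↑r.neg : Set α) ∩ ↑M = ∅ := by
          ext b
          simp only [Set.mem_inter_iff, Set.mem_empty_iff_false, iff_false, not_and,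
            Finset.mem_coe]
          intro hb hbM
          exact hneg b hb ((hcU b).mpr hbM)
        have hQ : r.horn ∈ Q := ⟨r, ⟨hrP, hnegM⟩, rfl⟩
        have hqT : r.head ∈ TPiter Q 1 := by
          refine ⟨r.horn, hQ, rfl, ?_⟩
          intro a ha
          rw [LPRule.horn] at ha
          simp only [Finset.coe_sort_coe] at ha
          rw [hpos] at ha
          exact absurd ha (by simp)
        have hqM : r.head ∈ M := hTM 1 hqT
        have h2 := hsqle r.head hqM 1 hqT
        have h3 := hsq1 r.head hqM
        exact ⟨hqM, by omega⟩
      · obtain ⟨hpos, hneg, hnq⟩ := hF3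
        have hnegM : (↑r.neg : Set α) ∩ ↑M = ∅ := by
          ext b
          simp only [Set.mem_inter_iff, Set.mem_empty_iff_false, iff_false, not_and,
            Finset.mem_coe]
          intro hb hbM
          exact hneg b hb ((hcU b).mpr hbM)
        have hQ : r.horn ∈ Q := ⟨r, ⟨hrP, hnegM⟩, rfl⟩
        have hposT : ∀ a ∈ r.pos, a ∈ TPiter Q (i - 1) := by
          intro a ha
          obtain ⟨haM, hlt, _⟩ := (hcmU a i).mp (hpos a ha)
          exact TPiter_mono Q (by omega : sq a ≤ i - 1) (hsq a haM).1
        have hqT : r.head ∈ TPiter Q i := by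
          obtain ⟨j, rfl⟩ : ∃ j, i = j + 1 := ⟨i - 1, by omega⟩
          refine ⟨r.horn, hQ, rfl, ?_⟩
          intro a ha
          rw [LPRule.horn] at ha
          exact hposT a ha
        have hqM : r.head ∈ M := hTM i hqT
        refine ⟨hqM, ?_⟩
        have h2 := hsqle r.head hqM i hqT
        have h3 : ¬(sq r.head < i ∧ i ≤ k + 1) := by
          rintro ⟨ha, hb⟩
          exact hnq ((hcmU r.head i).mpr ⟨hqM, ha, hb⟩)
        omega
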